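/- For every positive integer n there is a surjective bi-p-morphism from the (n+1)-comb onto the n-comb with handle, obtained by identifying the two bottom points x₁ and x₁' of the (n+1)-comb. -/

import Mathlib

/-- The `n`-comb: `⟨i, true⟩` is the spine point `xᵢ₊₁`, while `⟨i, false⟩` is the
tooth `xᵢ₊₁'`, a minimal immediate predecessor of `xᵢ₊₁`. -/
structure Comb (n : ℕ) where
  idx : Fin n
  spine : Bool

instance {n : ℕ} : PartialOrder (Comb n) where
  le u v := u = v ∨ (u.idx ≤ v.idx ∧ v.spine = true)
  le_refl u := Or.inl rfl
  le_trans u v w huv hvw := by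
    rcases huv with rfl | ⟨h1, h2⟩
    · exact hvw
    · rcases hvw with rfl | ⟨h3, h4⟩
      · exact Or.inr ⟨h1, h2⟩
      · exact Or.inr ⟨le_trans h1 h3, h4⟩
  le_antisymm u v huv hvu := by
    rcases huv with rfl | ⟨h1, h2⟩
    · rfl
    · rcases hvu with h | ⟨h3, h4⟩
      · exact h.symm
      · obtain ⟨i, b⟩ := u
        obtain ⟨j, c⟩ := v
        have hij : i = j := le_antisymm h1 h3
        have hb : b = true := h4
        have hc : c = true := h2
        subst hij; subst hb; subst hc
        rfl

/-- The `n`-comb with handle: the extra point `handle` is the minimal point `y₀`, an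
immediate predecessor of the bottom spine point. -/
inductive HComb (n : ℕ) where
  | handle : HComb n
  | pt : Comb n → HComb n

namespace HComb

def le' {n : ℕ} : HComb n → HComb n → Prop
  | .handle, .handle => True
  | .handle, .pt c => c.spine = true
  | .pt _, .handle => False
  | .pt c, .pt c' => c ≤ c'

instance {n : ℕ} : PartialOrder (HComb n) where
  le := le'
  le_refl u := by cases u with
    | handle => trivial
    | pt c => exact le_refl c
  le_trans u v w huv hvw := by
    cases u with
    | handle =>
      cases v with
      | handle => exact hvw
      | pt c =>
        cases w with
        | handle => exact absurd hvw id
        | pt c' =>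
          rcases (hvw : c ≤ c') with rfl | ⟨_, h⟩
          · exact huv
          · exact h
    | pt c =>
      cases v with
      | handle => exact absurd huv id
      | pt c' =>
        cases w with
        | handle => exact absurd hvw id
        | pt c'' =>
          show c ≤ c''
          exact le_trans (show c ≤ c' from huv) (show c' ≤ c'' from hvw)
  le_antisymm u v huv hvu := by
    cases u with
    | handle =>
      cases v with
      | handle => rfl
      | pt c => exact absurd hvu id
    | pt c =>
      cases v with
      | handle => exact absurd huv id
      | pt c' => exact congrArg HComb.pt (le_antisymm (huv : c ≤ c') (hvu : c' ≤ c))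

end HComb

/-- For every positive integer `n` there is a surjective bi-p-morphism from the
`(n+1)`-comb onto the `n`-comb with handle, identifying the two bottom points
`x₁` and `x₁'`. -/
theorem comb_to_hcomb_surjective_biPMorphism (n : ℕ) (hn : 0 < n) :
    ∃ f : Comb (n + 1) → HComb n,
      Monotone f ∧
      (∀ (x : Comb (n + 1)) (y : HComb n), f x ≤ y → ∃ z, x ≤ z ∧ f z = y) ∧
      (∀ (x : Comb (n + 1)) (y : HComb n), y ≤ f x → ∃ z, z ≤ x ∧ f z = y) ∧
      Function.Surjective f ∧
      f ⟨0, true⟩ = f ⟨0, false⟩ := by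
  classical
  set f : Comb (n + 1) → HComb n := fun x =>
    if h : (x.idx : ℕ) = 0 then HComb.handle
    else HComb.pt ⟨⟨(x.idx : ℕ) - 1, by omega⟩, x.spine⟩ with hf
  have fzero : ∀ (i : Fin (n+1)) (b : Bool), (i : ℕ) = 0 → f ⟨i, b⟩ = HComb.handle := by
    intro i b h; simp [hf, h]; exact Fin.ext h
  have fsucc : ∀ (i : Fin (n+1)) (b : Bool) (h : (i : ℕ) ≠ 0),
      f ⟨i, b⟩ = HComb.pt ⟨⟨(i : ℕ) - 1, by omega⟩, b⟩ := by
    intro i b h; simp [hf, h]; exact fun e => h (by simp [e])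
  refine ⟨f, ?_, ?_, ?_, ?_, ?_⟩
  · -- Monotone
    rintro ⟨i, b⟩ ⟨j, c⟩ h
    rcases h with h | ⟨h1, h2⟩
    · cases h; exact le_refl _
    · have h1' : (i : ℕ) ≤ (j : ℕ) := h1
      subst h2
      by_cases hi : (i : ℕ) = 0
      · rw [fzero i b hi]
        by_cases hj : (j : ℕ) = 0
        · rw [fzero j true hj]
        · rw [fsucc j true hj]
          rfl
      · have hj : (j : ℕ) ≠ 0 := by omega
        rw [fsucc i b hi, fsucc j true hj]
        exact Or.inr ⟨by simp [Fin.mk_le_mk]; omega, rfl⟩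
  · -- up condition
    rintro ⟨i, b⟩ y h
    by_cases hi : (i : ℕ) = 0
    · rw [fzero i b hi] at h
      cases y with
      | handle => exact ⟨⟨i, b⟩, le_refl _, fzero i b hi⟩
      | pt c =>
        obtain ⟨j, d⟩ := c
        have hd : d = true := h
        subst hd
        refine ⟨⟨⟨(j : ℕ) + 1, by omega⟩, true⟩, Or.inr ⟨by show (i:ℕ) ≤ (j:ℕ)+1; omega, rfl⟩, ?_⟩
        simp [hf]
    · rw [fsucc i b hi] at h
      cases y with
      | handle => exact absurd h id
      | pt c =>
        obtain ⟨j, d⟩ := c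
        rcases (h : (⟨⟨(i:ℕ)-1, _⟩, b⟩ : Comb n) ≤ ⟨j, d⟩) with heq | ⟨h1, h2⟩
        · refine ⟨⟨i, b⟩, le_refl _, ?_⟩
          rw [fsucc i b hi]; rw [heq]
        · have h1' : (i : ℕ) - 1 ≤ (j : ℕ) := h1
          have hd : d = true := h2
          subst hd
          refine ⟨⟨⟨(j : ℕ) + 1, by omega⟩, true⟩, Or.inr ⟨by show (i:ℕ) ≤ (j:ℕ)+1; omega, rfl⟩, ?_⟩
          simp [hf]
  · -- down condition
    rintro ⟨i, b⟩ y h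
    by_cases hi : (i : ℕ) = 0
    · rw [fzero i b hi] at h
      cases y with
      | handle => exact ⟨⟨i, b⟩, le_refl _, fzero i b hi⟩
      | pt c => exact absurd h id
    · rw [fsucc i b hi] at h
      cases y with
      | handle =>
        have hb : b = true := h
        subst hb
        refine ⟨⟨⟨0, by omega⟩, true⟩, Or.inr ⟨by simp [Fin.mk_le_mk], rfl⟩, fzero _ _ rfl⟩
      | pt c =>
        obtain ⟨j, d⟩ := c
        rcases (h : (⟨j, d⟩ : Comb n) ≤ ⟨⟨(i:ℕ)-1, _⟩, b⟩) with heq | ⟨h1, h2⟩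
        · refine ⟨⟨i, b⟩, le_refl _, ?_⟩
          rw [fsucc i b hi, ← heq]
        · have h1' : (j : ℕ) ≤ (i : ℕ) - 1 := h1
          have hb : b = true := h2
          subst hb
          refine ⟨⟨⟨(j : ℕ) + 1, by omega⟩, d⟩, Or.inr ⟨by show (j:ℕ)+1 ≤ (i:ℕ); omega, rfl⟩, ?_⟩
          simp [hf]
  · -- surjective
    rintro (_ | ⟨j, d⟩)
    · exact ⟨⟨⟨0, by omega⟩, true⟩, fzero _ _ rfl⟩
    · refine ⟨⟨⟨(j : ℕ) + 1, by omega⟩, d⟩, ?_⟩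
      simp [hf]
  · rw [fzero _ _ rfl, fzero _ _ rfl]
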